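/- Let n ≥ 1 and let f : ℝ^{2(2ⁿ−1)} → ℝ be continuous, its arguments indexed by two copies of the nonempty subsets of {1, …, n}. Suppose that for every N ≥ 1 and all subgroups H₁, …, H_n of Equiv.Perm (Fin N) one has f( ((1/N)·log(N!/|⨅_{i∈α} H_i|))_α , ((1/N)·log(N!/|⨆_{i∈β} H_i|))_β ) ≥ 0. Then for every finite probability space (Ω, p) and all setoids s₁, …, s_n on Ω one has f( (H_p(⨅_{i∈α} s_i))_α , (H_p(⨆_{i∈β} s_i))_β ) ≥ 0. -/

import Mathlib

open Classical in
/-- Probability of the equivalence class `c` of the setoid `s`. -/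
noncomputable def classProb {Ω : Type*} [Fintype Ω] (p : Ω → ℝ) (s : Setoid Ω)
    (c : Quotient s) : ℝ :=
  ∑ ω ∈ Finset.univ.filter (fun ω => (⟦ω⟧ : Quotient s) = c), p ω

open Classical in
/-- Shannon entropy of the partition induced by the setoid `s`
(with the convention `0 · log 0 = 0`). -/
noncomputable def entropy {Ω : Type*} [Fintype Ω] (p : Ω → ℝ) (s : Setoid Ω) : ℝ :=
  -∑ c : Quotient s, classProb p s c * Real.log (classProb p s c)

section Aux

open Relation Filter Real Stirling Topology

/-! ### Setoid lemmas -/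

theorem rel_iInf' {Ω : Type*} {ι : Sort*} (S : ι → Setoid Ω) (a b : Ω) :
    (⨅ i, S i) a b ↔ ∀ i, S i a b := by
  rw [iInf, Setoid.sInf_iff]; simp

theorem rel_biInf' {Ω : Type*} {ι : Type*} (α : Finset ι) (S : ι → Setoid Ω) (a b : Ω) :
    (⨅ i ∈ α, S i) a b ↔ ∀ i ∈ α, S i a b := by
  rw [rel_iInf']; exact forall_congr' fun i => by rw [rel_iInf']

theorem biSup_setoid' {Ω : Type*} {n : ℕ} (s : Fin n → Setoid Ω) (β : Finset (Fin n)) :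
    (⨆ i ∈ β, s i) = EqvGen.setoid (fun a b => ∃ i ∈ β, s i a b) := by
  apply le_antisymm
  · refine iSup_le fun i => iSup_le fun hi => ?_
    intro a b hab
    exact EqvGen.rel a b ⟨i, hi, hab⟩
  · refine Setoid.eqvGen_le fun a b hab => ?_
    obtain ⟨i, hi, h⟩ := hab
    exact Setoid.le_def.mp (le_iSup₂ (f := fun i (_ : i ∈ β) => s i) i hi) h

/-! ### The subgroup associated to a setoid -/

def Hgrp {N : ℕ} {Ω : Type*} (φ : Fin N → Ω) (s : Setoid Ω) : Subgroup (Equiv.Perm (Fin N)) where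
  carrier := {g | ∀ x, s (φ (g x)) (φ x)}
  mul_mem' {a b} ha hb x := s.trans (ha (b x)) (hb x)
  one_mem' x := s.refl _
  inv_mem' {g} hg x := by have := hg (g⁻¹ x); simpa using s.symm this

theorem mem_Hgrp {N : ℕ} {Ω : Type*} {φ : Fin N → Ω} {s : Setoid Ω} {g : Equiv.Perm (Fin N)} :
    g ∈ Hgrp φ s ↔ ∀ x, s (φ (g x)) (φ x) := Iff.rfl

theorem Hgrp_iInf {N : ℕ} {Ω : Type*} (φ : Fin N → Ω) {n : ℕ} (s : Fin n → Setoid Ω)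
    (α : Finset (Fin n)) : Hgrp φ (⨅ i ∈ α, s i) = ⨅ i ∈ α, Hgrp φ (s i) := by
  ext g
  simp only [mem_Hgrp, rel_biInf', Subgroup.mem_iInf]
  exact ⟨fun h i hi x => h x i hi, fun h x i hi => h i hi x⟩

theorem swap_mem_Hgrp {N : ℕ} {Ω : Type*} {φ : Fin N → Ω} {s : Setoid Ω} {x y : Fin N}
    (h : s (φ x) (φ y)) : Equiv.swap x y ∈ Hgrp φ s := by
  intro z
  rcases eq_or_ne z x with rfl | hzx
  · simpa using s.symm h
  rcases eq_or_ne z y with rfl | hzy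
  · simpa using h
  · simpa [Equiv.swap_apply_of_ne_of_ne hzx hzy] using s.refl (φ z)

theorem Hgrp_iSup {N : ℕ} {Ω : Type*} {φ : Fin N → Ω} (hφ : Function.Surjective φ) {n : ℕ}
    (s : Fin n → Setoid Ω) (β : Finset (Fin n)) (hβ : β.Nonempty) :
    Hgrp φ (⨆ i ∈ β, s i) = ⨆ i ∈ β, Hgrp φ (s i) := by
  set t := ⨆ i ∈ β, s i with ht
  set K := ⨆ i ∈ β, Hgrp φ (s i) with hK
  apply le_antisymm
  · have key : ∀ q q', EqvGen (fun a b => ∃ i ∈ β, s i a b) q q' →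
        ∀ x y : Fin N, φ x = q → φ y = q' → Equiv.swap x y ∈ K := by
      intro q q' h
      induction h with
      | rel a b hab =>
        rintro x y rfl rfl
        obtain ⟨i, hi, hab⟩ := hab
        exact SetLike.le_def.mp (le_iSup₂ (f := fun i (_ : i ∈ β) => Hgrp φ (s i)) i hi)
          (swap_mem_Hgrp hab)
      | refl a =>
        rintro x y rfl hy
        obtain ⟨i, hi⟩ := hβ
        refine SetLike.le_def.mp (le_iSup₂ (f := fun i (_ : i ∈ β) => Hgrp φ (s i)) i hi)
          (swap_mem_Hgrp ?_)
        rw [hy]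
      | symm a b hab ih =>
        intro x y hx hy
        rw [Equiv.swap_comm]
        exact ih y x hy hx
      | trans a b c hab hbc ih1 ih2 =>
        intro x y hx hy
        obtain ⟨z, hz⟩ := hφ b
        exact SubmonoidClass.swap_mem_trans K (ih1 x z hx hz) (ih2 z y hz hy)
    intro g hg
    have hrel : ∀ x, t (φ (g x)) (φ x) := hg
    have hrel' : ∀ x y : Fin N, t (φ x) (φ y) → Equiv.swap x y ∈ K := by
      intro x y h
      rw [ht, biSup_setoid'] at h
      exact key _ _ h x y rfl rfl
    set S : Set (Equiv.Perm (Fin N)) :=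
      {σ | ∃ x y : Fin N, x ≠ y ∧ t (φ x) (φ y) ∧ σ = Equiv.swap x y} with hS
    have hSswap : ∀ σ ∈ S, σ.IsSwap := by
      rintro σ ⟨x, y, hne, -, rfl⟩; exact ⟨x, y, hne, rfl⟩
    have hcl : Subgroup.closure S ≤ K := by
      rw [Subgroup.closure_le]
      rintro σ ⟨x, y, -, hrelxy, rfl⟩
      exact hrel' x y hrelxy
    refine hcl ?_
    rw [mem_closure_isSwap hSswap]
    refine ⟨Set.toFinite _, fun x => ?_⟩
    rcases eq_or_ne (g x) x with h | h
    · rw [h]; exact MulAction.mem_orbit_self x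
    · exact ⟨⟨Equiv.swap x (g x), Subgroup.subset_closure ⟨x, g x, h.symm, t.symm (hrel x), rfl⟩⟩,
        Equiv.swap_apply_left x (g x)⟩
  · refine iSup_le fun i => iSup_le fun hi => ?_
    intro g hg x
    exact Setoid.le_def.mp (le_iSup₂ (f := fun i (_ : i ∈ β) => s i) i hi) (hg x)

/-! ### Cardinality of `Hgrp` -/

open Classical in
theorem card_Hgrp {N : ℕ} {Ω : Type*} [Fintype Ω] (φ : Fin N → Ω) (s : Setoid Ω) :
    Nat.card ↥(Hgrp φ s) =
      ∏ c : Quotient s, (Fintype.card {x : Fin N // (⟦φ x⟧ : Quotient s) = c}).factorial := by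
  classical
  have h1 : Nat.card ↥(Hgrp φ s) = Fintype.card
      {g : Equiv.Perm (Fin N) //
        (fun x => (⟦φ x⟧ : Quotient s)) ∘ g = fun x => (⟦φ x⟧ : Quotient s)} := by
    rw [← Nat.card_eq_fintype_card]
    apply Nat.card_congr
    apply Equiv.subtypeEquivRight
    intro g
    constructor
    · intro hg
      funext x
      exact Quotient.eq.mpr (hg x)
    · intro hg x
      exact Quotient.eq.mp (congrFun hg x)
  rw [h1, DomMulAct.stabilizer_card]

/-! ### Maps with prescribed fibers -/

def sigmaFstFiber {ι : Type*} (β : ι → Type*) (i : ι) : {x : Σ j, β j // x.1 = i} ≃ β i where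
  toFun := fun x => x.2 ▸ x.1.2
  invFun := fun b => ⟨⟨i, b⟩, rfl⟩
  left_inv := by rintro ⟨⟨j, b⟩, rfl⟩; rfl
  right_inv := fun b => rfl

theorem exists_fiber_map {Ω : Type*} [Fintype Ω] [DecidableEq Ω] (a : Ω → ℕ) :
    ∃ φ : Fin (∑ ω, a ω) → Ω, ∀ ω, Fintype.card {x // φ x = ω} = a ω := by
  have hcard : Fintype.card (Fin (∑ ω, a ω)) = Fintype.card (Σ ω, Fin (a ω)) := by
    simp [Fintype.card_sigma]
  let e := Fintype.equivOfCardEq hcard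
  refine ⟨fun x => (e x).1, fun ω => ?_⟩
  rw [Fintype.card_congr ((e.subtypeEquiv (fun x => Iff.rfl)).trans
    (sigmaFstFiber (fun ω => Fin (a ω)) ω))]
  simp

open Classical in
/-- total weight (by `a`) of the class `c`. -/
noncomputable def wcls {Ω : Type*} [Fintype Ω] (a : Ω → ℕ) (s : Setoid Ω) (c : Quotient s) : ℕ :=
  ∑ ω ∈ Finset.univ.filter (fun ω => (⟦ω⟧ : Quotient s) = c), a ω

open Classical in
theorem card_class_fiber {N : ℕ} {Ω : Type*} [Fintype Ω] {a : Ω → ℕ} {φ : Fin N → Ω}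
    (hφ : ∀ ω, Fintype.card {x // φ x = ω} = a ω) (s : Setoid Ω) (c : Quotient s) :
    Fintype.card {x : Fin N // (⟦φ x⟧ : Quotient s) = c} = wcls a s c := by
  classical
  rw [Fintype.card_subtype]
  rw [Finset.card_eq_sum_card_fiberwise
    (f := φ) (t := Finset.univ.filter (fun ω => (⟦ω⟧ : Quotient s) = c))
    (fun x hx => by simpa using Finset.mem_filter.mp hx |>.2)]
  refine Finset.sum_congr rfl fun ω hω => ?_
  have h2 : Finset.filter (fun x => φ x = ω)
        (Finset.filter (fun x => (⟦φ x⟧ : Quotient s) = c) Finset.univ)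
      = Finset.filter (fun x => φ x = ω) Finset.univ := by
    ext x
    simp only [Finset.mem_filter, Finset.mem_univ, true_and, and_iff_right_iff_imp]
    rintro rfl
    simpa using Finset.mem_filter.mp hω |>.2
  rw [h2, ← Fintype.card_subtype, hφ ω]

/-! ### Stirling asymptotics -/

theorem logFacLimit :
    Tendsto (fun m : ℕ => Real.log (Nat.factorial m) / m - Real.log m) atTop (𝓝 (-1)) := by
  have hpi : (0:ℝ) < Real.sqrt Real.pi := Real.sqrt_pos.mpr Real.pi_pos
  have h1 : Tendsto (fun m : ℕ => Real.log (stirlingSeq m) / m) atTop (𝓝 0) := by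
    have hlog : Tendsto (fun m : ℕ => Real.log (stirlingSeq m)) atTop
        (𝓝 (Real.log (Real.sqrt Real.pi))) :=
      ((Real.continuousAt_log hpi.ne').tendsto).comp tendsto_stirlingSeq_sqrt_pi
    exact hlog.div_atTop tendsto_natCast_atTop_atTop
  have h2 : Tendsto (fun m : ℕ => 1 / 2 * Real.log (2 * m) / m) atTop (𝓝 0) := by
    have hlo : Tendsto (fun x : ℝ => Real.log x / x) atTop (𝓝 0) :=
      Real.isLittleO_log_id_atTop.tendsto_div_nhds_zero
    have hcomp : Tendsto (fun m : ℕ => Real.log (2 * m) / (2 * m)) atTop (𝓝 0) :=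
      hlo.comp ((tendsto_natCast_atTop_atTop (R := ℝ)).const_mul_atTop two_pos)
    convert hcomp.const_mul 1 using 2 with m
    · ring
    · simp
  have key : ∀ᶠ m : ℕ in atTop, Real.log (stirlingSeq m) / m + 1 / 2 * Real.log (2 * m) / m - 1
      = Real.log (Nat.factorial m) / m - Real.log m := by
    filter_upwards [eventually_ge_atTop 1] with m hm
    have hm0 : (m : ℝ) ≠ 0 := Nat.cast_ne_zero.mpr (by omega)
    have hform := log_stirlingSeq_formula m
    have hlogdiv : Real.log ((m : ℝ) / Real.exp 1) = Real.log m - 1 := by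
      rw [Real.log_div hm0 (Real.exp_ne_zero 1), Real.log_exp]
    rw [hlogdiv] at hform
    have hgoal : Real.log (Nat.factorial m)
        = Real.log (stirlingSeq m) + 1 / 2 * Real.log (2 * m) + m * (Real.log m - 1) := by
      linarith
    rw [hgoal]
    field_simp
    ring
  have h3 := (h1.add h2).sub_const 1
  rw [show (0:ℝ) + 0 - 1 = -1 by ring] at h3
  exact Tendsto.congr' key h3

theorem logFacLimit_mul (a : ℕ) (ha : 1 ≤ a) :
    Tendsto (fun k : ℕ => Real.log (Nat.factorial (a * (k+1))) / (a * (k+1) : ℕ)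
      - Real.log ((a * (k+1) : ℕ))) atTop (𝓝 (-1)) := by
  have hmono : Tendsto (fun k : ℕ => a * (k + 1)) atTop atTop := by
    apply tendsto_atTop_mono (fun k => ?_) tendsto_id
    calc (k : ℕ) ≤ k + 1 := Nat.le_succ k
    _ ≤ a * (k + 1) := Nat.le_mul_of_pos_left _ (by omega)
  exact logFacLimit.comp hmono

theorem coordinate_limit {γ : Type*} [Fintype γ] (M : ℕ) (hM : 1 ≤ M) (m : γ → ℕ)
    (hm : ∀ c, 1 ≤ m c) (hsum : ∑ c, m c = M) :
    Tendsto (fun k : ℕ => (1 / ((M * (k+1) : ℕ) : ℝ)) *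
        Real.log ((Nat.factorial (M * (k+1)) : ℝ) / ((∏ c, Nat.factorial (m c * (k+1)) : ℕ) : ℝ)))
      atTop (𝓝 (-∑ c, ((m c : ℝ) / M) * Real.log ((m c : ℝ) / M))) := by
  have hM0 : (M : ℝ) ≠ 0 := Nat.cast_ne_zero.mpr (by omega)
  have hm0 : ∀ c, ((m c : ℝ)) ≠ 0 := fun c => Nat.cast_ne_zero.mpr (by have := hm c; omega)
  have hsum' : ∑ c, ((m c : ℝ) / M) = 1 := by
    rw [← Finset.sum_div, div_eq_one_iff_eq hM0]
    exact_mod_cast hsum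
  set C : ℝ := Real.log M - ∑ c, ((m c : ℝ) / M) * Real.log (m c) with hC
  have htarget : (-∑ c, ((m c : ℝ) / M) * Real.log ((m c : ℝ) / M)) = C := by
    rw [hC]
    have h1 : ∀ c : γ, ((m c : ℝ) / M) * Real.log ((m c : ℝ) / M)
        = ((m c : ℝ) / M) * Real.log (m c) - ((m c : ℝ) / M) * Real.log M := by
      intro c
      rw [Real.log_div (hm0 c) hM0]
      ring
    rw [Finset.sum_congr rfl (fun c _ => h1 c), Finset.sum_sub_distrib, ← Finset.sum_mul, hsum']
    ring
  set A : ℕ → ℝ := fun k => Real.log (Nat.factorial (M * (k+1))) / ((M * (k+1) : ℕ) : ℝ)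
      - Real.log ((M * (k+1) : ℕ) : ℝ) with hA
  set B : ℕ → ℝ := fun k => ∑ c, ((m c : ℝ) / M) *
      (Real.log (Nat.factorial (m c * (k+1))) / ((m c * (k+1) : ℕ) : ℝ)
        - Real.log ((m c * (k+1) : ℕ) : ℝ)) with hB
  set D : ℕ → ℝ := fun k => Real.log ((M * (k+1) : ℕ) : ℝ)
      - ∑ c, ((m c : ℝ) / M) * Real.log ((m c * (k+1) : ℕ) : ℝ) with hD
  have hK0 : ∀ k : ℕ, ((k : ℝ) + 1) ≠ 0 := fun k => by positivity
  have hDconst : ∀ k, D k = C := by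
    intro k
    have h1 : Real.log ((M * (k+1) : ℕ) : ℝ) = Real.log M + Real.log ((k : ℝ) + 1) := by
      push_cast
      rw [Real.log_mul hM0 (hK0 k)]
    have h2 : ∀ c : γ, ((m c : ℝ) / M) * Real.log ((m c * (k+1) : ℕ) : ℝ)
        = ((m c : ℝ) / M) * Real.log (m c) + ((m c : ℝ) / M) * Real.log ((k : ℝ) + 1) := by
      intro c
      have h3 : ((m c * (k+1) : ℕ) : ℝ) = (m c : ℝ) * ((k : ℝ) + 1) := by push_cast; ring
      rw [h3, Real.log_mul (hm0 c) (hK0 k)]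
      ring
    rw [hD]
    simp only [h1, Finset.sum_congr rfl (fun c _ => h2 c)]
    rw [Finset.sum_add_distrib, ← Finset.sum_mul, hsum']
    ring
  have hident : ∀ k : ℕ, (1 / ((M * (k+1) : ℕ) : ℝ)) *
      Real.log ((Nat.factorial (M * (k+1)) : ℝ) / ((∏ c, Nat.factorial (m c * (k+1)) : ℕ) : ℝ))
      = A k - B k + D k := by
    intro k
    have hfac : (Nat.factorial (M * (k+1)) : ℝ) ≠ 0 :=
      Nat.cast_ne_zero.mpr (Nat.factorial_pos _).ne'
    have hprod : ((∏ c, Nat.factorial (m c * (k+1)) : ℕ) : ℝ) ≠ 0 :=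
      Nat.cast_ne_zero.mpr (Finset.prod_pos (fun c _ => Nat.factorial_pos _)).ne'
    rw [Real.log_div hfac hprod, Nat.cast_prod,
      Real.log_prod (fun c _ => Nat.cast_ne_zero.mpr (Nat.factorial_pos _).ne')]
    have hterm : ∀ c : γ, (1 / ((M * (k+1) : ℕ) : ℝ)) * Real.log (Nat.factorial (m c * (k+1)))
        = ((m c : ℝ) / M) * (Real.log (Nat.factorial (m c * (k+1))) / ((m c * (k+1) : ℕ) : ℝ)) := by
      intro c
      have e1 : ((M * (k+1) : ℕ) : ℝ) = (M : ℝ) * ((k : ℝ) + 1) := by push_cast; ring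
      have e2 : ((m c * (k+1) : ℕ) : ℝ) = (m c : ℝ) * ((k : ℝ) + 1) := by push_cast; ring
      have hMpos : (0:ℝ) < M := by exact_mod_cast Nat.pos_of_ne_zero (by omega)
      have hmpos : (0:ℝ) < m c := by exact_mod_cast hm c
      have hKpos : (0:ℝ) < (k : ℝ) + 1 := by positivity
      rw [e1, e2, div_mul_div_comm, one_div_mul_eq_div,
        div_eq_div_iff (by positivity) (by positivity)]
      ring
    rw [hA, hB, hD]
    simp only [mul_sub, Finset.mul_sum]
    rw [Finset.sum_congr rfl (fun c _ => hterm c)]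
    rw [Finset.sum_sub_distrib]
    have e1 : ((M * (k+1) : ℕ) : ℝ) ≠ 0 := by
      push_cast
      positivity
    field_simp
    ring
  have hAlim : Tendsto A atTop (𝓝 (-1)) := logFacLimit_mul M hM
  have hBlim : Tendsto B atTop (𝓝 (-1)) := by
    have h4 := tendsto_finset_sum (Finset.univ : Finset γ)
      (fun c _ => ((logFacLimit_mul (m c) (hm c)).const_mul ((m c : ℝ) / M)))
    have hval : ∑ c : γ, ((m c : ℝ) / M) * (-1) = -1 := by
      rw [← Finset.sum_mul, hsum']; ring
    rw [hval] at h4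
    exact h4
  have hfinal : Tendsto (fun k => A k - B k + D k) atTop (𝓝 C) := by
    have h := (hAlim.sub hBlim)
    rw [show (-1 : ℝ) - (-1) = 0 by ring] at h
    have h2 : Tendsto (fun k => A k - B k + D k) atTop (𝓝 (0 + C)) :=
      Tendsto.add h (Tendsto.congr (fun k => (hDconst k).symm) tendsto_const_nhds)
    rwa [zero_add] at h2
  rw [htarget]
  exact hfinal.congr (fun k => (hident k).symm)

/-! ### Entropy for rational weights -/

open Classical in
theorem entropy_rat {Ω : Type*} [Fintype Ω] (a : Ω → ℕ) (M : ℕ) (hMeq : ∑ ω, a ω = M)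
    (t : Setoid Ω) :
    entropy (fun ω => (a ω : ℝ) / M) t
      = -∑ c : Quotient t, ((wcls a t c : ℝ) / M) * Real.log ((wcls a t c : ℝ) / M) := by
  have hcp : ∀ c : Quotient t, classProb (fun ω => (a ω : ℝ) / M) t c = (wcls a t c : ℝ) / M := by
    intro c
    unfold classProb wcls
    push_cast
    rw [Finset.sum_div]
  unfold entropy
  congr 1
  exact Finset.sum_congr rfl fun c _ => by rw [hcp]

end Aux

section Main

open Filter Topology

theorem rat_case (n : ℕ) (hn : 1 ≤ n)
    (f : (({α : Finset (Fin n) // α.Nonempty} ⊕ {α : Finset (Fin n) // α.Nonempty}) → ℝ) → ℝ)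
    (hf : Continuous f)
    (hlaw : ∀ N : ℕ, 1 ≤ N → ∀ H : Fin n → Subgroup (Equiv.Perm (Fin N)),
      0 ≤ f (Sum.elim
        (fun α => (1 / (N : ℝ)) *
          Real.log ((Nat.factorial N : ℝ) / (Nat.card ↥(⨅ i ∈ α.1, H i) : ℝ)))
        (fun β => (1 / (N : ℝ)) *
          Real.log ((Nat.factorial N : ℝ) / (Nat.card ↥(⨆ i ∈ β.1, H i) : ℝ)))))
    (Ω : Type) [Fintype Ω] (hΩ : Nonempty Ω) (a : Ω → ℕ) (ha : ∀ ω, 1 ≤ a ω)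
    (s : Fin n → Setoid Ω) :
    0 ≤ f (Sum.elim
      (fun α => entropy (fun ω => (a ω : ℝ) / ((∑ ω, a ω : ℕ) : ℝ)) (⨅ i ∈ α.1, s i))
      (fun β => entropy (fun ω => (a ω : ℝ) / ((∑ ω, a ω : ℕ) : ℝ)) (⨆ i ∈ β.1, s i))) := by
  classical
  obtain ⟨ω₀⟩ := hΩ
  set M : ℕ := ∑ ω, a ω with hMdef
  have hM : 1 ≤ M :=
    le_trans (ha ω₀) (Finset.single_le_sum (fun ω _ => Nat.zero_le _) (Finset.mem_univ ω₀))
  -- fiber maps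
  have hex : ∀ k : ℕ, ∃ φ : Fin (∑ ω, a ω * (k+1)) → Ω,
      ∀ ω, Fintype.card {x // φ x = ω} = a ω * (k+1) := fun k => exists_fiber_map _
  choose Φ hΦ using hex
  have hsurj : ∀ k, Function.Surjective (Φ k) := by
    intro k ω
    have hpos : 0 < Fintype.card {x // Φ k x = ω} := by
      rw [hΦ]
      exact Nat.mul_pos (ha ω) (Nat.succ_pos k)
    obtain ⟨⟨x, hx⟩⟩ := Fintype.card_pos_iff.mp hpos
    exact ⟨x, hx⟩
  have hN : ∀ k : ℕ, (∑ ω, a ω * (k+1)) = M * (k+1) := fun k => by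
    rw [hMdef, Finset.sum_mul]
  have hN1 : ∀ k : ℕ, 1 ≤ ∑ ω, a ω * (k+1) := fun k => by
    rw [hN k]; exact Nat.one_le_iff_ne_zero.mpr (by positivity)
  -- weights of classes
  have hwsum : ∀ t : Setoid Ω, ∑ c : Quotient t, wcls a t c = M := by
    intro t
    unfold wcls
    rw [hMdef]
    exact Finset.sum_fiberwise _ _ _
  have hwpos : ∀ (t : Setoid Ω) (c : Quotient t), 1 ≤ wcls a t c := by
    intro t c
    obtain ⟨ω, rfl⟩ := Quotient.exists_rep c
    unfold wcls
    refine le_trans (ha ω) (Finset.single_le_sum (fun _ _ => Nat.zero_le _) ?_)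
    simp only [Finset.mem_filter, Finset.mem_univ, true_and]
  -- cardinality of groups
  have hcard : ∀ (k : ℕ) (t : Setoid Ω), Nat.card ↥(Hgrp (Φ k) t)
      = ∏ c : Quotient t, Nat.factorial (wcls a t c * (k+1)) := by
    intro k t
    rw [card_Hgrp]
    refine Finset.prod_congr rfl fun c _ => ?_
    rw [card_class_fiber (hΦ k) t c]
    congr 1
    unfold wcls
    exact (Finset.sum_mul _ _ _).symm
  -- the sequence of vectors
  set vec : ℕ → (({α : Finset (Fin n) // α.Nonempty} ⊕ {α : Finset (Fin n) // α.Nonempty}) → ℝ) :=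
    fun k => Sum.elim
      (fun α => (1 / ((∑ ω, a ω * (k+1) : ℕ) : ℝ)) *
        Real.log ((Nat.factorial (∑ ω, a ω * (k+1)) : ℝ) /
          (Nat.card ↥(⨅ i ∈ α.1, Hgrp (Φ k) (s i)) : ℝ)))
      (fun β => (1 / ((∑ ω, a ω * (k+1) : ℕ) : ℝ)) *
        Real.log ((Nat.factorial (∑ ω, a ω * (k+1)) : ℝ) /
          (Nat.card ↥(⨆ i ∈ β.1, Hgrp (Φ k) (s i)) : ℝ))) with hvec
  have hge : ∀ k, 0 ≤ f (vec k) := fun k => hlaw _ (hN1 k) _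
  have hTend : Tendsto vec atTop (𝓝 (Sum.elim
      (fun α => entropy (fun ω => (a ω : ℝ) / (M : ℝ)) (⨅ i ∈ α.1, s i))
      (fun β => entropy (fun ω => (a ω : ℝ) / (M : ℝ)) (⨆ i ∈ β.1, s i)))) := by
    rw [tendsto_pi_nhds]
    rintro (α | β)
    · simp only [hvec, Sum.elim_inl]
      set t : Setoid Ω := ⨅ i ∈ α.1, s i with htdef
      have hco : ∀ k : ℕ, (1 / ((∑ ω, a ω * (k+1) : ℕ) : ℝ)) *
          Real.log ((Nat.factorial (∑ ω, a ω * (k+1)) : ℝ) /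
            (Nat.card ↥(⨅ i ∈ α.1, Hgrp (Φ k) (s i)) : ℝ))
          = (1 / ((M * (k+1) : ℕ) : ℝ)) *
            Real.log ((Nat.factorial (M * (k+1)) : ℝ) /
              ((∏ c : Quotient t, Nat.factorial (wcls a t c * (k+1)) : ℕ) : ℝ)) := by
        intro k
        rw [← Hgrp_iInf (Φ k) s α.1, hcard k t, hN k]
      rw [entropy_rat a M hMdef.symm t]
      exact ((coordinate_limit M hM (wcls a t) (hwpos t) (hwsum t)).congr
        (fun k => (hco k).symm))
    · simp only [hvec, Sum.elim_inr]
      set t : Setoid Ω := ⨆ i ∈ β.1, s i with htdef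
      have hco : ∀ k : ℕ, (1 / ((∑ ω, a ω * (k+1) : ℕ) : ℝ)) *
          Real.log ((Nat.factorial (∑ ω, a ω * (k+1)) : ℝ) /
            (Nat.card ↥(⨆ i ∈ β.1, Hgrp (Φ k) (s i)) : ℝ))
          = (1 / ((M * (k+1) : ℕ) : ℝ)) *
            Real.log ((Nat.factorial (M * (k+1)) : ℝ) /
              ((∏ c : Quotient t, Nat.factorial (wcls a t c * (k+1)) : ℕ) : ℝ)) := by
        intro k
        rw [← Hgrp_iSup (hsurj k) s β.1 β.2, hcard k t, hN k]
      rw [entropy_rat a M hMdef.symm t]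
      exact ((coordinate_limit M hM (wcls a t) (hwpos t) (hwsum t)).congr
        (fun k => (hco k).symm))
  exact ge_of_tendsto' ((hf.tendsto _).comp hTend) hge

end Main


open Filter Topology in
/-- If a continuous law holds for the normalized log-indices of intersections
and joins of any `n` subgroups of any symmetric group, then the same law holds
for the entropies of all joint and common information elements of any `n`
information elements on any finite probability space. -/
theorem stmt_13 (n : ℕ) (hn : 1 ≤ n)
    (f : (({α : Finset (Fin n) // α.Nonempty} ⊕ {α : Finset (Fin n) // α.Nonempty}) → ℝ) → ℝ)
    (hf : Continuous f)
    (hlaw : ∀ N : ℕ, 1 ≤ N → ∀ H : Fin n → Subgroup (Equiv.Perm (Fin N)),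
      0 ≤ f (Sum.elim
        (fun α => (1 / (N : ℝ)) *
          Real.log ((Nat.factorial N : ℝ) / (Nat.card ↥(⨅ i ∈ α.1, H i) : ℝ)))
        (fun β => (1 / (N : ℝ)) *
          Real.log ((Nat.factorial N : ℝ) / (Nat.card ↥(⨆ i ∈ β.1, H i) : ℝ))))) :
    ∀ (Ω : Type) [Fintype Ω] (p : Ω → ℝ),
      (∀ ω, 0 ≤ p ω) → ∑ ω, p ω = 1 →
      ∀ s : Fin n → Setoid Ω,
        0 ≤ f (Sum.elim
          (fun α => entropy p (⨅ i ∈ α.1, s i))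
          (fun β => entropy p (⨆ i ∈ β.1, s i))) := by

  intro Ω _ p hp hsum s
  classical
  have hΩ : Nonempty Ω := by
    by_contra h
    rw [not_nonempty_iff] at h
    rw [Finset.univ_eq_empty, Finset.sum_empty] at hsum
    norm_num at hsum
  -- the approximating rational weights
  have h0 : ∀ m : ℕ, 0 ≤ f (Sum.elim
      (fun α => entropy (fun ω => ((⌊(m : ℝ) * p ω⌋₊ + 1 : ℕ) : ℝ) /
        ((∑ ω, (⌊(m : ℝ) * p ω⌋₊ + 1) : ℕ) : ℝ)) (⨅ i ∈ α.1, s i))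
      (fun β => entropy (fun ω => ((⌊(m : ℝ) * p ω⌋₊ + 1 : ℕ) : ℝ) /
        ((∑ ω, (⌊(m : ℝ) * p ω⌋₊ + 1) : ℕ) : ℝ)) (⨆ i ∈ β.1, s i))) :=
    fun m => rat_case n hn f hf hlaw Ω hΩ (fun ω => ⌊(m : ℝ) * p ω⌋₊ + 1)
      (fun ω => Nat.le_add_left 1 _) s
  -- convergence of the weights
  have h1 : ∀ ω, Tendsto (fun m : ℕ => ((⌊(m : ℝ) * p ω⌋₊ + 1 : ℕ) : ℝ) / m) atTop (𝓝 (p ω)) := by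
    intro ω
    have hfl : Tendsto (fun m : ℕ => (⌊p ω * (m : ℝ)⌋₊ : ℝ) / (m : ℝ)) atTop (𝓝 (p ω)) :=
      (tendsto_nat_floor_mul_div_atTop (hp ω)).comp (tendsto_natCast_atTop_atTop (R := ℝ))
    have h1m : Tendsto (fun m : ℕ => (1 : ℝ) / m) atTop (𝓝 0) :=
      tendsto_one_div_atTop_nhds_zero_nat
    have h2 := hfl.add h1m
    rw [add_zero] at h2
    refine h2.congr fun m => ?_
    rw [mul_comm (p ω) ((m : ℕ) : ℝ)]
    push_cast
    ring
  have hM1 : Tendsto (fun m : ℕ => ((∑ ω, (⌊(m : ℝ) * p ω⌋₊ + 1) : ℕ) : ℝ) / m)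
      atTop (𝓝 1) := by
    have h2 := tendsto_finset_sum Finset.univ (fun ω (_ : ω ∈ Finset.univ) => h1 ω)
    rw [hsum] at h2
    refine h2.congr fun m => ?_
    rw [Nat.cast_sum, Finset.sum_div]
  have hq : ∀ ω, Tendsto (fun m : ℕ => ((⌊(m : ℝ) * p ω⌋₊ + 1 : ℕ) : ℝ) /
      ((∑ ω, (⌊(m : ℝ) * p ω⌋₊ + 1) : ℕ) : ℝ)) atTop (𝓝 (p ω)) := by
    intro ω
    have h2 := (h1 ω).div hM1 one_ne_zero
    rw [div_one] at h2
    refine Tendsto.congr' ?_ h2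
    filter_upwards [eventually_ge_atTop 1] with m hm
    have hm0 : (m : ℝ) ≠ 0 := Nat.cast_ne_zero.mpr (by omega)
    have hMpos : 0 < ∑ ω, (⌊(m : ℝ) * p ω⌋₊ + 1) :=
      Finset.sum_pos (fun ω _ => Nat.succ_pos _) Finset.univ_nonempty
    have hMne : ((∑ ω, (⌊(m : ℝ) * p ω⌋₊ + 1) : ℕ) : ℝ) ≠ 0 :=
      Nat.cast_ne_zero.mpr hMpos.ne'
    rw [Pi.div_apply, div_div_div_cancel_right₀ hm0]
  -- convergence of entropies
  have hent : ∀ t : Setoid Ω, Tendsto (fun m : ℕ => entropy (fun ω =>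
      ((⌊(m : ℝ) * p ω⌋₊ + 1 : ℕ) : ℝ) / ((∑ ω, (⌊(m : ℝ) * p ω⌋₊ + 1) : ℕ) : ℝ)) t)
      atTop (𝓝 (entropy p t)) := by
    intro t
    unfold entropy
    apply Tendsto.neg
    apply tendsto_finset_sum
    intro c _
    have hcp : Tendsto (fun m : ℕ => classProb (fun ω =>
        ((⌊(m : ℝ) * p ω⌋₊ + 1 : ℕ) : ℝ) / ((∑ ω, (⌊(m : ℝ) * p ω⌋₊ + 1) : ℕ) : ℝ)) t c)
        atTop (𝓝 (classProb p t c)) := by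
      unfold classProb
      exact tendsto_finset_sum _ (fun ω _ => hq ω)
    exact (Real.continuous_mul_log.tendsto _).comp hcp
  have hvecT : Tendsto (fun m : ℕ => Sum.elim
      (fun α : {α : Finset (Fin n) // α.Nonempty} => entropy (fun ω =>
        ((⌊(m : ℝ) * p ω⌋₊ + 1 : ℕ) : ℝ) / ((∑ ω, (⌊(m : ℝ) * p ω⌋₊ + 1) : ℕ) : ℝ))
        (⨅ i ∈ α.1, s i))
      (fun β : {α : Finset (Fin n) // α.Nonempty} => entropy (fun ω =>
        ((⌊(m : ℝ) * p ω⌋₊ + 1 : ℕ) : ℝ) / ((∑ ω, (⌊(m : ℝ) * p ω⌋₊ + 1) : ℕ) : ℝ))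
        (⨆ i ∈ β.1, s i)))
      atTop (𝓝 (Sum.elim
        (fun α => entropy p (⨅ i ∈ α.1, s i))
        (fun β => entropy p (⨆ i ∈ β.1, s i)))) := by
    rw [tendsto_pi_nhds]
    rintro (α | β)
    · simpa only [Sum.elim_inl] using hent (⨅ i ∈ α.1, s i)
    · simpa only [Sum.elim_inr] using hent (⨆ i ∈ β.1, s i)
  exact ge_of_tendsto' ((hf.tendsto _).comp hvecT) h0
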